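/- Let T ≥ 2, p > 1, α ∈ (0,1), k ∈ ℕ, σ > (k+α)p/(p-1), and w(t) := (1 - t/T)^σ. Define D_p(T) := T^{(p-2)/(p-1)} if p > 2, D_p(T) := log T if p = 2, and D_p(T) := 1 if 1 < p < 2. Then there exists C > 0 independent of T such that ∫_0^T ((1+t) w(t))^{-1/(p-1)} |(Γ(σ+1)/Γ(σ+1-k-α)) T^{-(k+α)} (1-t/T)^{σ-(k+α)}|^{p/(p-1)} dt ≤ C · D_p(T) · T^{-(k+α)p/(p-1)}. -/

import Mathlib

open MeasureTheory intervalIntegral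

theorem ptwise (p σ β : ℝ) (G T t : ℝ) (hp : 1 < p) (hβ : 0 < β) (hσ : β * (p/(p-1)) < σ)
    (hT : 0 < T) (ht0 : 0 ≤ t) (htT : t ≤ T) :
    (((1 + t) * (1 - t / T) ^ σ) ^ (-(1 / (p - 1)))) *
      |G * T ^ (-β) * (1 - t / T) ^ (σ - β)| ^ (p / (p - 1))
    ≤ |G| ^ (p/(p-1)) * T ^ (-(β * (p/(p-1)))) * (1 + t) ^ (-(1/(p-1))) := by
  have hp1 : (0:ℝ) < p - 1 := by linarith
  set q : ℝ := p / (p - 1) with hq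
  set r : ℝ := -(1 / (p - 1)) with hr
  have hq0 : 0 < q := by positivity
  have hr0 : r ≠ 0 := by rw [hr]; intro h; have : 1/(p-1) > 0 := by positivity
                         linarith [neg_eq_zero.mp h]
  have hσ0 : 0 < σ := lt_trans (by positivity) hσ
  have hu0 : 0 ≤ 1 - t / T := by
    rw [sub_nonneg]; exact div_le_one_of_le₀ htT hT.le
  have hu1 : 1 - t / T ≤ 1 := by
    have : 0 ≤ t / T := by positivity
    linarith
  have h1t : (0:ℝ) < 1 + t := by linarith
  rcases eq_or_lt_of_le hu0 with h0 | h0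
  · rw [← h0, Real.zero_rpow hσ0.ne', mul_zero, Real.zero_rpow hr0, zero_mul]
    positivity
  · set u : ℝ := 1 - t / T with hu
    have habs : |G * T ^ (-β) * u ^ (σ - β)| = |G| * T ^ (-β) * u ^ (σ - β) := by
      rw [abs_mul, abs_mul, abs_of_pos (Real.rpow_pos_of_pos hT _),
        abs_of_nonneg (Real.rpow_nonneg h0.le _)]
    rw [habs, Real.mul_rpow h1t.le (Real.rpow_nonneg h0.le _),
        Real.mul_rpow (mul_nonneg (abs_nonneg G) (Real.rpow_nonneg hT.le _)) (Real.rpow_nonneg h0.le _),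
        Real.mul_rpow (abs_nonneg G) (Real.rpow_nonneg hT.le _),
        ← Real.rpow_mul hT.le, ← Real.rpow_mul h0.le, ← Real.rpow_mul h0.le,
        neg_mul]
    have hE : σ * r + (σ - β) * q = σ - β * q := by
      rw [hr, hq]; field_simp; ring
    have hEnn : 0 ≤ σ - β * q := by linarith
    have hule : u ^ (σ - β * q) ≤ 1 := Real.rpow_le_one h0.le hu1 hEnn
    calc (1 + t) ^ r * u ^ (σ * r) * (|G| ^ q * T ^ (-(β * q)) * u ^ ((σ - β) * q))
        = (|G| ^ q * T ^ (-(β * q)) * (1 + t) ^ r) * (u ^ (σ * r) * u ^ ((σ - β) * q)) := by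
          ring
      _ = (|G| ^ q * T ^ (-(β * q)) * (1 + t) ^ r) * u ^ (σ * r + (σ - β) * q) := by
          rw [← Real.rpow_add h0]
      _ = (|G| ^ q * T ^ (-(β * q)) * (1 + t) ^ r) * u ^ (σ - β * q) := by rw [hE]
      _ ≤ (|G| ^ q * T ^ (-(β * q)) * (1 + t) ^ r) * 1 := by
          apply mul_le_mul_of_nonneg_left hule (by positivity)
      _ = |G| ^ q * T ^ (-(β * q)) * (1 + t) ^ r := mul_one _

theorem Jbound (p : ℝ) (hp : 1 < p) : ∃ K : ℝ, 0 < K ∧ ∀ T : ℝ, 2 ≤ T →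
    (∫ t in (0:ℝ)..T, (1 + t) ^ (-(1/(p-1))))
      ≤ K * (if 2 < p then T ^ ((p-2)/(p-1)) else if p = 2 then Real.log T else 1) := by
  have hp1 : (0:ℝ) < p - 1 := by linarith
  set r : ℝ := -(1 / (p - 1)) with hr
  have hJ : ∀ T : ℝ, 2 ≤ T →
      (∫ t in (0:ℝ)..T, (1 + t) ^ r) = ∫ x in (1:ℝ)..(1+T), x ^ r := by
    intro T hT
    have := intervalIntegral.integral_comp_add_left (a := (0:ℝ)) (b := T)
      (fun x : ℝ => x ^ r) 1
    simpa using this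
  rcases lt_trichotomy 2 p with h2 | h2 | h2
  · -- p > 2
    have hm1 : -1 < r := by
      rw [hr]; have : 1/(p-1) < 1 := by rw [div_lt_one hp1]; linarith
      linarith
    have hr1 : r + 1 = (p-2)/(p-1) := by rw [hr]; field_simp; ring
    have hr1pos : 0 < r + 1 := by linarith
    refine ⟨2/(r+1), by positivity, fun T hT => ?_⟩
    rw [if_pos h2, hJ T hT, integral_rpow (Or.inl hm1), Real.one_rpow]
    have hTpos : (0:ℝ) < T := by linarith
    have h1 : (1+T) ^ (r+1) ≤ 2 * T ^ (r+1) := by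
      calc (1+T) ^ (r+1) ≤ (2*T) ^ (r+1) :=
            Real.rpow_le_rpow (by linarith) (by linarith) hr1pos.le
        _ = 2 ^ (r+1) * T ^ (r+1) := Real.mul_rpow (by norm_num) hTpos.le
        _ ≤ 2 * T ^ (r+1) := by
            have h2le : (2:ℝ) ^ (r+1) ≤ 2 ^ (1:ℝ) :=
              Real.rpow_le_rpow_of_exponent_le one_le_two (by
                rw [hr1, div_le_one hp1]; linarith)
            have := Real.rpow_one (2:ℝ)
            nlinarith [Real.rpow_nonneg hTpos.le (r+1)]
    rw [div_le_iff₀ hr1pos, ← hr1]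
    have heq : 2/(r+1)*T^(r+1)*(r+1) = 2*T^(r+1) := by field_simp
    rw [heq]
    linarith
  · -- p = 2
    subst h2
    refine ⟨2, by norm_num, fun T hT => ?_⟩
    have hTpos : (0:ℝ) < T := by linarith
    rw [if_neg (lt_irrefl 2), if_pos rfl, hJ T hT]
    have hfun : (fun x : ℝ => x ^ r) = fun x : ℝ => x⁻¹ := by
      funext x
      have : r = ((-1 : ℤ) : ℝ) := by rw [hr]; norm_num
      rw [this, Real.rpow_intCast, zpow_neg_one]
    rw [hfun, integral_inv (by
      intro h
      rcases h with h
      simp [Set.uIcc_of_le (by linarith : (1:ℝ) ≤ 1 + T)] at h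
      linarith [h.1])]
    rw [div_one]
    have h1 : 1 + T ≤ T * T := by nlinarith
    calc Real.log (1 + T) ≤ Real.log (T * T) :=
          Real.log_le_log (by linarith) h1
      _ = Real.log T + Real.log T := Real.log_mul (by linarith) (by linarith)
      _ = 2 * Real.log T := by ring
  · -- p < 2
    have hm1 : r < -1 := by
      rw [hr]; have : 1 < 1/(p-1) := by rw [lt_div_iff₀ hp1]; linarith
      linarith
    have hr1neg : r + 1 < 0 := by linarith
    have hpos : (0:ℝ) < -(r+1) := by linarith
    refine ⟨1/(-(r+1)), by positivity, fun T hT => ?_⟩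
    have hTpos : (0:ℝ) < T := by linarith
    rw [if_neg (by linarith), if_neg (by linarith), hJ T hT,
      integral_rpow (Or.inr ⟨by linarith, by
        intro h
        simp [Set.uIcc_of_le (by linarith : (1:ℝ) ≤ 1 + T)] at h
        linarith [h.1]⟩), Real.one_rpow, mul_one,
      div_le_iff_of_neg hr1neg]
    have := Real.rpow_nonneg (by linarith : (0:ℝ) ≤ 1 + T) (r+1)
    have hne : -(r+1) ≠ 0 := by linarith
    have heq : 1/(-(r+1)) * (r+1) = -1 := by
      field_simp
      rw [div_self (by linarith : (r + 1 : ℝ) ≠ 0)]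
    rw [heq]
    linarith

/-- Second integral estimate of Lemma 3.3:
`∫_0^T ((1+t)w(t))^{-1/(p-1)} |D_{t|T}^{k+α} w(t)|^{p/(p-1)} dt ≲ 𝒟_p(T) T^{-(k+α)p/(p-1)}`,
where `w(t) = (1-t/T)^σ`, `𝒟_p(T) = T^{(p-2)/(p-1)}` if `p > 2`, `log T` if `p = 2`,
and `1` if `p < 2`. -/
theorem frac_integral_estimate_two (p σ α : ℝ) (k : ℕ) (hp : 1 < p)
    (hα : α ∈ Set.Ioo (0:ℝ) 1) (hσ : ((k : ℝ) + α) * p / (p - 1) < σ) :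
    ∃ C : ℝ, 0 < C ∧ ∀ T : ℝ, 2 ≤ T →
      (∫ t in (0:ℝ)..T, (((1 + t) * (1 - t / T) ^ σ) ^ (-(1 / (p - 1)))) *
        |(Real.Gamma (σ + 1) / Real.Gamma (σ + 1 - k - α)) * T ^ (-((k : ℝ) + α)) *
          (1 - t / T) ^ (σ - ((k : ℝ) + α))| ^ (p / (p - 1)))
      ≤ C * (if 2 < p then T ^ ((p - 2) / (p - 1)) else if p = 2 then Real.log T else 1) *
          T ^ (-(((k : ℝ) + α) * p / (p - 1))) := by
  obtain ⟨K, hK, hKb⟩ := Jbound p hp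
  have hp1 : (0:ℝ) < p - 1 := by linarith
  obtain ⟨hα0, hα1⟩ := hα
  set q : ℝ := p / (p - 1) with hq
  set β : ℝ := (k : ℝ) + α with hβdef
  set G : ℝ := Real.Gamma (σ + 1) / Real.Gamma (σ + 1 - (k : ℝ) - α) with hG
  have hβ : 0 < β := by positivity
  have hσ' : β * q < σ := by rw [hq, ← mul_div_assoc]; exact hσ
  refine ⟨|G| ^ q * K + 1, by positivity, fun T hT => ?_⟩
  have hTpos : (0:ℝ) < T := by linarith
  set D : ℝ := if 2 < p then T ^ ((p - 2) / (p - 1)) else if p = 2 then Real.log T else 1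
    with hDdef
  have hD : 0 ≤ D := by
    rw [hDdef]; split_ifs
    · exact Real.rpow_nonneg hTpos.le _
    · exact Real.log_nonneg (by linarith)
    · norm_num
  have hexp : β * p / (p - 1) = β * q := by rw [hq, ← mul_div_assoc]
  rw [hexp]
  set f : ℝ → ℝ := fun t => (((1 + t) * (1 - t / T) ^ σ) ^ (-(1 / (p - 1)))) *
    |G * T ^ (-β) * (1 - t / T) ^ (σ - β)| ^ q with hf
  set g : ℝ → ℝ := fun t => |G| ^ q * T ^ (-(β * q)) * (1 + t) ^ (-(1 / (p - 1))) with hg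
  have hgc : ContinuousOn g (Set.uIcc 0 T) := by
    apply ContinuousOn.mul continuousOn_const
    apply ContinuousOn.rpow_const ((continuous_const.add continuous_id').continuousOn)
    intro x hx
    left
    rw [Set.uIcc_of_le hTpos.le] at hx
    have := hx.1
    intro h; simp only [Pi.add_apply] at h; linarith
  have hg_int : IntervalIntegrable g volume 0 T := hgc.intervalIntegrable
  have hfm : Measurable f := by
    apply Measurable.mul
    · exact ((measurable_const.add measurable_id).mul
        ((measurable_const.sub (measurable_id.div_const T)).pow measurable_const)).pow
        measurable_const
    · exact (((measurable_const.mul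
        ((measurable_const.sub (measurable_id.div_const T)).pow measurable_const))).abs).pow
        measurable_const
  have hle : ∀ x ∈ Set.Icc (0:ℝ) T, f x ≤ g x := fun x hx =>
    ptwise p σ β G T x hp hβ hσ' hTpos hx.1 hx.2
  have hf_int : IntervalIntegrable f volume 0 T := by
    apply hg_int.mono_fun' (hfm.aestronglyMeasurable.restrict)
    rw [Filter.EventuallyLE, ae_restrict_iff' measurableSet_uIoc]
    apply Filter.Eventually.of_forall
    intro x hx
    rw [Set.uIoc_of_le hTpos.le] at hx
    have hfx : 0 ≤ f x := by
      apply mul_nonneg _ (Real.rpow_nonneg (abs_nonneg _) _)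
      apply Real.rpow_nonneg
      apply mul_nonneg (by linarith [hx.1])
      apply Real.rpow_nonneg
      rw [sub_nonneg]
      exact div_le_one_of_le₀ hx.2 hTpos.le
    rw [Real.norm_eq_abs, abs_of_nonneg hfx]
    exact hle x ⟨hx.1.le, hx.2⟩
  calc (∫ t in (0:ℝ)..T, f t) ≤ ∫ t in (0:ℝ)..T, g t :=
        integral_mono_on hTpos.le hf_int hg_int hle
    _ = |G| ^ q * T ^ (-(β * q)) * ∫ t in (0:ℝ)..T, (1 + t) ^ (-(1 / (p - 1))) := by
        rw [hg]; exact integral_const_mul _ _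
    _ ≤ |G| ^ q * T ^ (-(β * q)) * (K * D) := by
        apply mul_le_mul_of_nonneg_left (hKb T hT)
        positivity
    _ ≤ (|G| ^ q * K + 1) * D * T ^ (-(β * q)) := by
        have h1 : 0 ≤ T ^ (-(β * q)) := Real.rpow_nonneg hTpos.le _
        have h2 : 0 ≤ |G| ^ q := Real.rpow_nonneg (abs_nonneg _) _
        nlinarith [mul_nonneg hD h1]
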